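/- For every integer n with n ≡ 3 (mod 4) and 3 ≤ n ≤ 203, the n-crossing permutations over S_{n+3} generate exactly the parity-preserving subgroup: C(n, n+3) = P_{n+3}. (Writing n = 4k + 3, this subgroup is isomorphic to S_{2k+3} × S_{2k+3}, acting separately on the odd-numbered and even-numbered points of {1, …, n+3}.) -/

import Mathlib

set_option maxHeartbeats 1600000
set_option linter.unusedTactic false
set_option linter.unusedVariables false
set_option linter.unnecessarySeqFocus false

/-- The underlying function of the `n`-crossing permutation `π_j` over `{1, …, m}` (as a
function on `ℕ`): it sends `j + k` to `j + n - 1 - k` for `0 ≤ k ≤ n - 1` and fixes all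
other points. -/
def crossFun (n j i : ℕ) : ℕ :=
  if j ≤ i ∧ i < j + n then 2 * j + n - 1 - i else i

lemma crossFun_involutive (n j : ℕ) : Function.Involutive (crossFun n j) := by
  intro i
  unfold crossFun
  split_ifs <;> omega

/-- The `n`-crossing permutation `π_j`, viewed as a permutation of `ℕ` fixing every point
outside `{j, …, j + n - 1}`. -/
def crossPerm (n j : ℕ) : Equiv.Perm ℕ :=
  Function.Involutive.toPerm _ (crossFun_involutive n j)

/-- `C n m` is the subgroup of the symmetric group `S_m` (realized as permutations of `ℕ`
supported on `{1, …, m}`) generated by the `n`-crossing permutations `π_1, …, π_{m-n+1}`. -/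
def C (n m : ℕ) : Subgroup (Equiv.Perm ℕ) :=
  Subgroup.closure {σ | ∃ j, 1 ≤ j ∧ j ≤ m - n + 1 ∧ σ = crossPerm n j}

lemma crossPerm_apply (n j i : ℕ) :
    crossPerm n j i = if j ≤ i ∧ i < j + n then 2 * j + n - 1 - i else i := rfl

theorem Equiv.Perm.inv_apply_self {α : Type*} (f : Equiv.Perm α) (x : α) : f⁻¹ (f x) = x :=
  Equiv.symm_apply_apply f x

theorem Equiv.Perm.apply_inv_self {α : Type*} (f : Equiv.Perm α) (x : α) : f (f⁻¹ x) = x :=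
  Equiv.apply_symm_apply f x

-- tri
def tri (a b c : ℕ) : Equiv.Perm ℕ := Equiv.swap a b * Equiv.swap b c

lemma conj_swap (f : Equiv.Perm ℕ) (a b : ℕ) :
    f * Equiv.swap a b * f⁻¹ = Equiv.swap (f a) (f b) := by
  ext i
  simp only [Equiv.Perm.mul_apply, Equiv.swap_apply_def]
  rcases eq_or_ne i (f a) with h | h
  · simp [h, Equiv.Perm.inv_apply_self]
  · rcases eq_or_ne i (f b) with h2 | h2
    · by_cases hba : b = a <;> simp [h2, hba, Equiv.Perm.inv_apply_self]
    · have ha : f⁻¹ i ≠ a := fun e => h (by rw [← e]; simp)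
      have hb : f⁻¹ i ≠ b := fun e => h2 (by rw [← e]; simp)
      simp only [Equiv.Perm.inv_def] at ha hb
      simp [ha, hb, h, h2]

lemma conj_tri (f : Equiv.Perm ℕ) (a b c : ℕ) :
    f * tri a b c * f⁻¹ = tri (f a) (f b) (f c) := by
  unfold tri
  rw [show f * (Equiv.swap a b * Equiv.swap b c) * f⁻¹
      = (f * Equiv.swap a b * f⁻¹) * (f * Equiv.swap b c * f⁻¹) by group,
    conj_swap, conj_swap]

lemma tri_apply (a b c i : ℕ) (hab : a ≠ b) (hbc : b ≠ c) (hac : a ≠ c) :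
    tri a b c i = if i = a then b else if i = b then c else if i = c then a else i := by
  simp only [tri, Equiv.Perm.mul_apply, Equiv.swap_apply_def]
  split_ifs <;> omega

lemma tri_inv (a b c : ℕ) : (tri a b c)⁻¹ = tri c b a := by
  unfold tri
  rw [mul_inv_rev]
  simp [Equiv.swap_comm c b, Equiv.swap_comm b a]

lemma tri_rot (a b c : ℕ) (hab : a ≠ b) (hbc : b ≠ c) (hac : a ≠ c) :
    tri a b c = tri b c a := by
  ext i
  rw [tri_apply a b c i hab hbc hac, tri_apply b c a i hbc (Ne.symm hac) (Ne.symm hab)]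
  split_ifs <;> omega

/-- Parity preserving permutations supported on `[1,m]`. -/
def Pgr (m : ℕ) : Subgroup (Equiv.Perm ℕ) where
  carrier := {σ | (∀ i, σ i % 2 = i % 2) ∧ (∀ i, σ i ≠ i → 1 ≤ i ∧ i ≤ m)}
  one_mem' := ⟨fun _ => rfl, fun i h => absurd rfl h⟩
  mul_mem' := by
    rintro σ τ ⟨hp1, hs1⟩ ⟨hp2, hs2⟩
    refine ⟨fun i => ?_, fun i h => ?_⟩
    · simp only [Equiv.Perm.mul_apply]
      rw [hp1, hp2]
    · simp only [Equiv.Perm.mul_apply] at h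
      by_cases ht : τ i = i
      · exact hs1 i (by rwa [ht] at h)
      · exact hs2 i ht
  inv_mem' := by
    rintro σ ⟨hp, hs⟩
    refine ⟨fun i => ?_, fun i h => ?_⟩
    · conv_rhs => rw [show i = σ (σ⁻¹ i) by simp]
      rw [hp]
    · have : σ i ≠ i := by
        intro e
        apply h
        have e2 : σ⁻¹ i = σ⁻¹ (σ i) := by rw [e]
        rw [e2, Equiv.Perm.inv_apply_self]
      exact hs i this

lemma mem_Pgr {m : ℕ} {σ : Equiv.Perm ℕ} :
    σ ∈ Pgr m ↔ (∀ i, σ i % 2 = i % 2) ∧ (∀ i, σ i ≠ i → 1 ≤ i ∧ i ≤ m) := Iff.rfl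

lemma crossPerm_mem_C (n : ℕ) (j : ℕ) (h1 : 1 ≤ j) (h4 : j ≤ 4) :
    crossPerm n j ∈ C n (n + 3) :=
  Subgroup.subset_closure ⟨j, h1, by omega, rfl⟩

lemma crossPerm_mem_Pgr (n : ℕ) (hn : n % 2 = 1) (j : ℕ) (h1 : 1 ≤ j) (h4 : j ≤ 4) :
    crossPerm n j ∈ Pgr (n + 3) := by
  constructor
  · intro i
    rw [crossPerm_apply]
    split_ifs with h
    · omega
    · rfl
  · intro i h
    rw [crossPerm_apply] at h
    split_ifs at h with h'
    · omega
    · omega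

lemma C_le_Pgr (n : ℕ) (hn : n % 2 = 1) : C n (n + 3) ≤ Pgr (n + 3) := by
  apply Subgroup.closure_le _ |>.mpr
  rintro σ ⟨j, h1, hj, rfl⟩
  exact crossPerm_mem_Pgr n hn j h1 (by omega)

def tO (n : ℕ) : Equiv.Perm ℕ := crossPerm n 1 * crossPerm n 3
def tE (n : ℕ) : Equiv.Perm ℕ := crossPerm n 2 * crossPerm n 4

lemma tO_apply (n : ℕ) (hn3 : 3 ≤ n) (i : ℕ) :
    tO n i = if i = 0 then 0 else if i = 1 then n else if i = 2 then n - 1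
      else if i = 3 then n + 2 else if i = 4 then n + 1
      else if i ≤ n + 2 then i - 4 else i := by
  simp only [tO, Equiv.Perm.mul_apply, crossPerm_apply]
  split_ifs <;> omega

lemma tE_apply (n : ℕ) (hn3 : 3 ≤ n) (i : ℕ) :
    tE n i = if i ≤ 1 then i else if i = 2 then n + 1 else if i = 3 then n
      else if i = 4 then n + 3 else if i = 5 then n + 2
      else if i ≤ n + 3 then i - 4 else i := by
  simp only [tE, Equiv.Perm.mul_apply, crossPerm_apply]
  split_ifs <;> omega

lemma hO_eq (n : ℕ) (hn : n % 4 = 3) (hn3 : 3 ≤ n) :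
    crossPerm n 3 * crossPerm n 2 * crossPerm n 1 * crossPerm n 2 = tri 1 (n+2) 3 := by
  ext i
  rw [tri_apply _ _ _ _ (by omega) (by omega) (by omega)]
  simp only [Equiv.Perm.mul_apply, crossPerm_apply]
  split_ifs <;> omega

lemma hE_eq (n : ℕ) (hn : n % 4 = 3) (hn3 : 3 ≤ n) :
    crossPerm n 4 * crossPerm n 3 * crossPerm n 2 * crossPerm n 3 = tri 2 (n+3) 4 := by
  ext i
  rw [tri_apply _ _ _ _ (by omega) (by omega) (by omega)]
  simp only [Equiv.Perm.mul_apply, crossPerm_apply]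
  split_ifs <;> omega

section Chains
variable {n : ℕ}

lemma tO_mem : tO n ∈ C n (n+3) :=
  mul_mem (crossPerm_mem_C n 1 (by omega) (by omega)) (crossPerm_mem_C n 3 (by omega) (by omega))

lemma tE_mem : tE n ∈ C n (n+3) :=
  mul_mem (crossPerm_mem_C n 2 (by omega) (by omega)) (crossPerm_mem_C n 4 (by omega) (by omega))

lemma hO_mem (hn : n % 4 = 3) (hn3 : 3 ≤ n) : tri 1 (n+2) 3 ∈ C n (n+3) := by
  rw [← hO_eq n hn hn3]
  exact mul_mem (mul_mem (mul_mem (crossPerm_mem_C n 3 (by omega) (by omega))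
    (crossPerm_mem_C n 2 (by omega) (by omega))) (crossPerm_mem_C n 1 (by omega) (by omega)))
    (crossPerm_mem_C n 2 (by omega) (by omega))

lemma hE_mem (hn : n % 4 = 3) (hn3 : 3 ≤ n) : tri 2 (n+3) 4 ∈ C n (n+3) := by
  rw [← hE_eq n hn hn3]
  exact mul_mem (mul_mem (mul_mem (crossPerm_mem_C n 4 (by omega) (by omega))
    (crossPerm_mem_C n 3 (by omega) (by omega))) (crossPerm_mem_C n 2 (by omega) (by omega)))
    (crossPerm_mem_C n 3 (by omega) (by omega))

lemma chainO1 (hn : n % 4 = 3) (hn3 : 3 ≤ n) : ∀ d, 4*d + 3 ≤ n → tri (n-2-4*d) (n+2-4*d) (n-4*d) ∈ C n (n+3) := by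
  intro d
  induction d with
  | zero =>
    intro _
    have e1 : tO n 1 = n := by rw [tO_apply n hn3]; split_ifs <;> (try exact ‹False›.elim) <;> omega
    have e2 : tO n (n+2) = n - 2 := by rw [tO_apply n hn3]; split_ifs <;> (try exact ‹False›.elim) <;> omega
    have e3 : tO n 3 = n + 2 := by rw [tO_apply n hn3]; split_ifs <;> (try exact ‹False›.elim) <;> omega
    have key : tO n * tri 1 (n+2) 3 * (tO n)⁻¹ = tri n (n-2) (n+2) := by
      rw [conj_tri, e1, e2, e3]
    have : tri (n-2-4*0) (n+2-4*0) (n-4*0) = tri n (n-2) (n+2) := by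
      rw [show n-2-4*0 = n-2 by omega, show n+2-4*0 = n+2 by omega, show n-4*0 = n by omega]
      rw [tri_rot n (n-2) (n+2) (by omega) (by omega) (by omega)]
    rw [this, ← key]
    exact mul_mem (mul_mem (tO_mem) (hO_mem hn hn3)) (inv_mem tO_mem)
  | succ d ih =>
    intro hd
    have prev := ih (by omega)
    have e1 : tO n (n-2-4*d) = n-2-4*(d+1) := by rw [tO_apply n hn3]; split_ifs <;> (try exact ‹False›.elim) <;> omega
    have e2 : tO n (n+2-4*d) = n+2-4*(d+1) := by rw [tO_apply n hn3]; split_ifs <;> (try exact ‹False›.elim) <;> omega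
    have e3 : tO n (n-4*d) = n-4*(d+1) := by rw [tO_apply n hn3]; split_ifs <;> (try exact ‹False›.elim) <;> omega
    have key : tO n * tri (n-2-4*d) (n+2-4*d) (n-4*d) * (tO n)⁻¹
        = tri (n-2-4*(d+1)) (n+2-4*(d+1)) (n-4*(d+1)) := by
      rw [conj_tri, e1, e2, e3]
    rw [← key]
    exact mul_mem (mul_mem (tO_mem) prev) (inv_mem tO_mem)

lemma g1_mem (hn : n % 4 = 3) (hn3 : 3 ≤ n) : tri 1 5 3 ∈ C n (n+3) := by
  have h := chainO1 hn hn3 ((n-3)/4) (by omega)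
  rw [show n-2-4*((n-3)/4) = 1 by omega, show n+2-4*((n-3)/4) = 5 by omega,
    show n-4*((n-3)/4) = 3 by omega] at h
  exact h

lemma chainO2 (hn : n % 4 = 3) (hn3 : 3 ≤ n) (hn7 : 7 ≤ n) : ∀ d, 4*d + 7 ≤ n → tri (n-4-4*d) (n-4*d) (n-2-4*d) ∈ C n (n+3) := by
  intro d
  induction d with
  | zero =>
    intro _
    have e1 : tO n 1 = n := by rw [tO_apply n hn3]; split_ifs <;> (try exact ‹False›.elim) <;> omega
    have e2 : tO n 5 = 1 := by rw [tO_apply n hn3]; split_ifs <;> (try exact ‹False›.elim) <;> omega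
    have e3 : tO n 3 = n + 2 := by rw [tO_apply n hn3]; split_ifs <;> (try exact ‹False›.elim) <;> omega
    have f1 : tO n n = n - 4 := by rw [tO_apply n hn3]; split_ifs <;> (try exact ‹False›.elim) <;> omega
    have f2 : tO n (n+2) = n - 2 := by rw [tO_apply n hn3]; split_ifs <;> (try exact ‹False›.elim) <;> omega
    have key1 : tO n * tri 1 5 3 * (tO n)⁻¹ = tri n 1 (n+2) := by
      rw [conj_tri, e1, e2, e3]
    have key2 : tO n * tri n 1 (n+2) * (tO n)⁻¹ = tri (n-4) n (n-2) := by
      rw [conj_tri, f1, e1, f2]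
    have : tri (n-4-4*0) (n-4*0) (n-2-4*0) = tri (n-4) n (n-2) := by
      rw [show n-4-4*0 = n-4 by omega, show n-4*0 = n by omega, show n-2-4*0 = n-2 by omega]
    rw [this, ← key2, ← key1]
    refine mul_mem (mul_mem tO_mem (mul_mem (mul_mem tO_mem (g1_mem hn hn3)) (inv_mem tO_mem))) (inv_mem tO_mem)
  | succ d ih =>
    intro hd
    have prev := ih (by omega)
    have e1 : tO n (n-4-4*d) = n-4-4*(d+1) := by rw [tO_apply n hn3]; split_ifs <;> (try exact ‹False›.elim) <;> omega
    have e2 : tO n (n-4*d) = n-4*(d+1) := by rw [tO_apply n hn3]; split_ifs <;> (try exact ‹False›.elim) <;> omega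
    have e3 : tO n (n-2-4*d) = n-2-4*(d+1) := by rw [tO_apply n hn3]; split_ifs <;> (try exact ‹False›.elim) <;> omega
    have key : tO n * tri (n-4-4*d) (n-4*d) (n-2-4*d) * (tO n)⁻¹
        = tri (n-4-4*(d+1)) (n-4*(d+1)) (n-2-4*(d+1)) := by
      rw [conj_tri, e1, e2, e3]
    rw [← key]
    exact mul_mem (mul_mem (tO_mem) prev) (inv_mem tO_mem)

lemma gO_mem (hn : n % 4 = 3) (hn3 : 3 ≤ n) (i : ℕ) (hodd : i % 2 = 1) (h1 : 1 ≤ i) (h4 : i + 4 ≤ n + 2) :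
    tri i (i+4) (i+2) ∈ C n (n+3) := by
  rcases Nat.lt_or_ge (i % 4) 2 with h | h
  · have hi : i % 4 = 1 := by omega
    have hmem := chainO1 hn hn3 ((n-2-i)/4) (by omega)
    rw [show n-2-4*((n-2-i)/4) = i by omega, show n+2-4*((n-2-i)/4) = i+4 by omega,
      show n-4*((n-2-i)/4) = i+2 by omega] at hmem
    exact hmem
  · have hi : i % 4 = 3 := by omega
    have hmem := chainO2 hn hn3 (by omega) ((n-4-i)/4) (by omega)
    rw [show n-4-4*((n-4-i)/4) = i by omega, show n-4*((n-4-i)/4) = i+4 by omega,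
      show n-2-4*((n-4-i)/4) = i+2 by omega] at hmem
    exact hmem

lemma chainE1 (hn : n % 4 = 3) (hn3 : 3 ≤ n) : ∀ d, 4*d + 3 ≤ n → tri (n-1-4*d) (n+3-4*d) (n+1-4*d) ∈ C n (n+3) := by
  intro d
  induction d with
  | zero =>
    intro _
    have e1 : tE n 2 = n+1 := by rw [tE_apply n hn3]; split_ifs <;> (try exact ‹False›.elim) <;> omega
    have e2 : tE n (n+3) = n - 1 := by rw [tE_apply n hn3]; split_ifs <;> (try exact ‹False›.elim) <;> omega
    have e3 : tE n 4 = n + 3 := by rw [tE_apply n hn3]; split_ifs <;> (try exact ‹False›.elim) <;> omega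
    have key : tE n * tri 2 (n+3) 4 * (tE n)⁻¹ = tri (n+1) (n-1) (n+3) := by
      rw [conj_tri, e1, e2, e3]
    have : tri (n-1-4*0) (n+3-4*0) (n+1-4*0) = tri (n+1) (n-1) (n+3) := by
      rw [show n-1-4*0 = n-1 by omega, show n+3-4*0 = n+3 by omega, show n+1-4*0 = n+1 by omega]
      rw [tri_rot (n-1) (n+3) (n+1) (by omega) (by omega) (by omega),
        tri_rot (n+3) (n+1) (n-1) (by omega) (by omega) (by omega)]
    rw [this, ← key]
    exact mul_mem (mul_mem (tE_mem) (hE_mem hn hn3)) (inv_mem tE_mem)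
  | succ d ih =>
    intro hd
    have prev := ih (by omega)
    have e1 : tE n (n-1-4*d) = n-1-4*(d+1) := by rw [tE_apply n hn3]; split_ifs <;> (try exact ‹False›.elim) <;> omega
    have e2 : tE n (n+3-4*d) = n+3-4*(d+1) := by rw [tE_apply n hn3]; split_ifs <;> (try exact ‹False›.elim) <;> omega
    have e3 : tE n (n+1-4*d) = n+1-4*(d+1) := by rw [tE_apply n hn3]; split_ifs <;> (try exact ‹False›.elim) <;> omega
    have key : tE n * tri (n-1-4*d) (n+3-4*d) (n+1-4*d) * (tE n)⁻¹
        = tri (n-1-4*(d+1)) (n+3-4*(d+1)) (n+1-4*(d+1)) := by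
      rw [conj_tri, e1, e2, e3]
    rw [← key]
    exact mul_mem (mul_mem (tE_mem) prev) (inv_mem tE_mem)

lemma gE2_mem (hn : n % 4 = 3) (hn3 : 3 ≤ n) : tri 2 6 4 ∈ C n (n+3) := by
  have h := chainE1 hn hn3 ((n-3)/4) (by omega)
  rw [show n-1-4*((n-3)/4) = 2 by omega, show n+3-4*((n-3)/4) = 6 by omega,
    show n+1-4*((n-3)/4) = 4 by omega] at h
  exact h

lemma chainE2 (hn : n % 4 = 3) (hn3 : 3 ≤ n) (hn7 : 7 ≤ n) : ∀ d, 4*d + 7 ≤ n → tri (n-3-4*d) (n+1-4*d) (n-1-4*d) ∈ C n (n+3) := by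
  intro d
  induction d with
  | zero =>
    intro _
    have e1 : tE n 2 = n+1 := by rw [tE_apply n hn3]; split_ifs <;> (try exact ‹False›.elim) <;> omega
    have e2 : tE n 6 = 2 := by rw [tE_apply n hn3]; split_ifs <;> (try exact ‹False›.elim) <;> omega
    have e3 : tE n 4 = n+3 := by rw [tE_apply n hn3]; split_ifs <;> (try exact ‹False›.elim) <;> omega
    have f1 : tE n (n+1) = n-3 := by rw [tE_apply n hn3]; split_ifs <;> (try exact ‹False›.elim) <;> omega
    have f2 : tE n (n+3) = n-1 := by rw [tE_apply n hn3]; split_ifs <;> (try exact ‹False›.elim) <;> omega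
    have key1 : tE n * tri 2 6 4 * (tE n)⁻¹ = tri (n+1) 2 (n+3) := by
      rw [conj_tri, e1, e2, e3]
    have key2 : tE n * tri (n+1) 2 (n+3) * (tE n)⁻¹ = tri (n-3) (n+1) (n-1) := by
      rw [conj_tri, f1, e1, f2]
    have : tri (n-3-4*0) (n+1-4*0) (n-1-4*0) = tri (n-3) (n+1) (n-1) := by
      rw [show n-3-4*0 = n-3 by omega, show n+1-4*0 = n+1 by omega, show n-1-4*0 = n-1 by omega]
    rw [this, ← key2, ← key1]
    refine mul_mem (mul_mem tE_mem (mul_mem (mul_mem tE_mem (gE2_mem hn hn3)) (inv_mem tE_mem))) (inv_mem tE_mem)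
  | succ d ih =>
    intro hd
    have prev := ih (by omega)
    have e1 : tE n (n-3-4*d) = n-3-4*(d+1) := by rw [tE_apply n hn3]; split_ifs <;> (try exact ‹False›.elim) <;> omega
    have e2 : tE n (n+1-4*d) = n+1-4*(d+1) := by rw [tE_apply n hn3]; split_ifs <;> (try exact ‹False›.elim) <;> omega
    have e3 : tE n (n-1-4*d) = n-1-4*(d+1) := by rw [tE_apply n hn3]; split_ifs <;> (try exact ‹False›.elim) <;> omega
    have key : tE n * tri (n-3-4*d) (n+1-4*d) (n-1-4*d) * (tE n)⁻¹
        = tri (n-3-4*(d+1)) (n+1-4*(d+1)) (n-1-4*(d+1)) := by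
      rw [conj_tri, e1, e2, e3]
    rw [← key]
    exact mul_mem (mul_mem (tE_mem) prev) (inv_mem tE_mem)

lemma gE_mem (hn : n % 4 = 3) (hn3 : 3 ≤ n) (i : ℕ) (heven : i % 2 = 0) (h1 : 2 ≤ i) (h4 : i + 4 ≤ n + 3) :
    tri i (i+4) (i+2) ∈ C n (n+3) := by
  rcases Nat.lt_or_ge (i % 4) 2 with h | h
  · have hi : i % 4 = 0 := by omega
    have hmem := chainE2 hn hn3 (by omega) ((n-3-i)/4) (by omega)
    rw [show n-3-4*((n-3-i)/4) = i by omega, show n+1-4*((n-3-i)/4) = i+4 by omega,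
      show n-1-4*((n-3-i)/4) = i+2 by omega] at hmem
    exact hmem
  · have hi : i % 4 = 2 := by omega
    have hmem := chainE1 hn hn3 ((n-1-i)/4) (by omega)
    rw [show n-1-4*((n-1-i)/4) = i by omega, show n+3-4*((n-1-i)/4) = i+4 by omega,
      show n+1-4*((n-1-i)/4) = i+2 by omega] at hmem
    exact hmem

/-- the generating 3-cycles -/
def GammaSet (n : ℕ) : Set (Equiv.Perm ℕ) :=
  {g | ∃ i, 1 ≤ i ∧ i + 4 ≤ n + 3 ∧ g = tri i (i+4) (i+2)}

lemma GammaSet_sub_C (hn : n % 4 = 3) (hn3 : 3 ≤ n) : GammaSet n ⊆ (C n (n+3) : Set (Equiv.Perm ℕ)) := by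
  rintro g ⟨i, h1, h4, rfl⟩
  rcases Nat.even_or_odd i with he | ho
  · have he2 : i % 2 = 0 := Nat.even_iff.mp he
    exact gE_mem hn hn3 i he2 (by omega) h4
  · have ho2 : i % 2 = 1 := Nat.odd_iff.mp ho
    exact gO_mem hn hn3 i ho2 h1 (by omega)

end Chains

def GammaClo (n : ℕ) : Subgroup (Equiv.Perm ℕ) := Subgroup.closure (GammaSet n)
def fourSet : Set (Equiv.Perm ℕ) :=
  {1, Equiv.swap 1 3, Equiv.swap 2 4, Equiv.swap 1 3 * Equiv.swap 2 4}


section D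
variable {n : ℕ}

lemma tri_mem_Pgr (i : ℕ) (h1 : 1 ≤ i) (h4 : i + 4 ≤ n + 3) : tri i (i+4) (i+2) ∈ Pgr (n+3) := by
  rw [mem_Pgr]
  constructor
  · intro x
    rw [tri_apply _ _ _ _ (by omega) (by omega) (by omega)]
    split_ifs <;> omega
  · intro x hx
    rw [tri_apply _ _ _ _ (by omega) (by omega) (by omega)] at hx
    split_ifs at hx <;> omega

lemma swap_mem_Pgr (a b : ℕ) (hp : a % 2 = b % 2) (h1 : 1 ≤ a) (h2 : 1 ≤ b)
    (h3 : a ≤ n+3) (h4 : b ≤ n+3) : Equiv.swap a b ∈ Pgr (n+3) := by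
  rw [mem_Pgr]
  constructor
  · intro x
    rw [Equiv.swap_apply_def]
    split_ifs <;> omega
  · intro x hx
    rw [Equiv.swap_apply_def] at hx
    split_ifs at hx <;> omega

lemma GammaSet_sub_Pgr : GammaSet n ⊆ (Pgr (n+3) : Set (Equiv.Perm ℕ)) := by
  rintro g ⟨i, h1, h4, rfl⟩
  exact tri_mem_Pgr i h1 h4

lemma GammaClo_le_Pgr : GammaClo n ≤ Pgr (n+3) :=
  (Subgroup.closure_le _).mpr GammaSet_sub_Pgr

def suppF (n : ℕ) (σ : Equiv.Perm ℕ) : Finset ℕ :=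
  (Finset.Icc 1 (n+3)).filter (fun i => σ i ≠ i)

def topP (n : ℕ) (σ : Equiv.Perm ℕ) : ℕ :=
  if h : (suppF n σ).Nonempty then (suppF n σ).max' h else 0

def mu (n : ℕ) (σ : Equiv.Perm ℕ) : ℕ :=
  (n+5) * topP n σ + (topP n σ - σ (topP n σ))

lemma mem_suppF {σ : Equiv.Perm ℕ} {i : ℕ} :
    i ∈ suppF n σ ↔ (1 ≤ i ∧ i ≤ n + 3) ∧ σ i ≠ i := by
  simp [suppF, Finset.mem_filter, Finset.mem_Icc]

lemma eq_one_of_suppF_empty {σ : Equiv.Perm ℕ} (hσ : σ ∈ Pgr (n+3))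
    (h : ¬ (suppF n σ).Nonempty) : σ = 1 := by
  rw [Finset.not_nonempty_iff_eq_empty] at h
  ext i
  simp only [Equiv.Perm.one_apply]
  by_contra hne
  have : i ∈ suppF n σ := mem_suppF.mpr ⟨(mem_Pgr.mp hσ).2 i hne, hne⟩
  rw [h] at this
  exact absurd this (Finset.notMem_empty i)

lemma descent (hn : n % 4 = 3) (hn3 : 3 ≤ n) :
    ∀ (B : ℕ) (σ : Equiv.Perm ℕ), σ ∈ Pgr (n+3) → mu n σ < B →
      ∃ τ ∈ fourSet, σ * τ⁻¹ ∈ GammaClo n := by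
  intro B
  induction B with
  | zero => exact fun σ _ h => absurd h (Nat.not_lt_zero _)
  | succ B ih =>
    intro σ hσ hμ
    by_cases hs : (suppF n σ).Nonempty
    case neg =>
      refine ⟨1, by simp [fourSet], ?_⟩
      rw [eq_one_of_suppF_empty hσ hs]
      simp only [inv_one, mul_one]
      exact one_mem _
    case pos =>
      have hσp := mem_Pgr.mp hσ
      set T := (suppF n σ).max' hs with hTdef
      have hTmem := mem_suppF.mp ((suppF n σ).max'_mem hs)
      obtain ⟨⟨hT1, hT2⟩, hTne⟩ := hTmem
      have htop : topP n σ = T := by rw [topP, dif_pos hs]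
      have hfix : ∀ i, T < i → σ i = i := by
        intro i hi
        by_contra hne
        have hmem : i ∈ suppF n σ := mem_suppF.mpr ⟨hσp.2 i hne, hne⟩
        exact absurd ((suppF n σ).le_max' i hmem) (by omega)
      have hamoved : σ (σ T) ≠ σ T := fun e => hTne (σ.injective e)
      have haT : σ T ≤ T := (suppF n σ).le_max' _ (mem_suppF.mpr ⟨hσp.2 _ hamoved, hamoved⟩)
      have ha1 : 1 ≤ σ T := (hσp.2 _ hamoved).1
      have hpar : σ T % 2 = T % 2 := hσp.1 T
      have haT2 : σ T + 2 ≤ T := by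
        rcases Nat.lt_or_ge (σ T) T with h | h
        · omega
        · exact absurd (le_antisymm haT h) hTne
      set a := σ T with hadef
      by_cases hA : a + 4 ≤ T
      · -- inner move
        have hρmem : tri a (a+4) (a+2) ∈ GammaSet n := ⟨a, ha1, by omega, rfl⟩
        have hρPgr : tri a (a+4) (a+2) ∈ Pgr (n+3) := tri_mem_Pgr a ha1 (by omega)
        set ρ : Equiv.Perm ℕ := tri a (a+4) (a+2) with hρ
        have happ : ∀ x, ρ⁻¹ x = if x = a+2 then a+4 else if x = a+4 then a
            else if x = a then a+2 else x := by
          intro x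
          rw [hρ, tri_inv, tri_apply _ _ _ _ (by omega) (by omega) (by omega)]
        set σ' := ρ⁻¹ * σ with hσ'
        have hσ'mem : σ' ∈ Pgr (n+3) := mul_mem (inv_mem hρPgr) hσ
        have hσ'T : σ' T = a + 2 := by
          rw [hσ', Equiv.Perm.mul_apply, ← hadef, happ]
          split_ifs <;> omega
        have hσ'gt : ∀ i, T < i → σ' i = i := by
          intro i hi
          rw [hσ', Equiv.Perm.mul_apply, hfix i hi, happ]
          split_ifs <;> omega
        have hT'mem : T ∈ suppF n σ' := mem_suppF.mpr ⟨⟨hT1, hT2⟩, by rw [hσ'T]; omega⟩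
        have hs' : (suppF n σ').Nonempty := ⟨T, hT'mem⟩
        have heq : (suppF n σ').max' hs' = T := by
          refine le_antisymm (Finset.max'_le _ _ _ ?_) (Finset.le_max' _ _ hT'mem)
          intro y hy
          by_contra hgt
          exact absurd (hσ'gt y (by omega)) (mem_suppF.mp hy).2
        have hμ' : mu n σ' < mu n σ := by
          rw [mu, mu, htop, topP, dif_pos hs', heq, hσ'T, ← hadef]
          omega
        obtain ⟨τ, hτ4, hτmem⟩ := ih σ' hσ'mem (by omega)
        refine ⟨τ, hτ4, ?_⟩
        have hre : σ * τ⁻¹ = ρ * (σ' * τ⁻¹) := by rw [hσ']; group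
        rw [hre]
        exact mul_mem (Subgroup.subset_closure hρmem) hτmem
      · by_cases hT5 : 5 ≤ T
        · -- final move at position T
          have hveq : a = (T-4) + 2 := by omega
          have hρmem : tri (T-4) (T-4+4) (T-4+2) ∈ GammaSet n := ⟨T-4, by omega, by omega, rfl⟩
          have hρPgr : tri (T-4) (T-4+4) (T-4+2) ∈ Pgr (n+3) := tri_mem_Pgr (T-4) (by omega) (by omega)
          set ρ : Equiv.Perm ℕ := tri (T-4) (T-4+4) (T-4+2) with hρ
          have happ : ∀ x, ρ⁻¹ x = if x = T-4+2 then T-4+4 else if x = T-4+4 then T-4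
              else if x = T-4 then T-4+2 else x := by
            intro x
            rw [hρ, tri_inv, tri_apply _ _ _ _ (by omega) (by omega) (by omega)]
          set σ' := ρ⁻¹ * σ with hσ'
          have hσ'mem : σ' ∈ Pgr (n+3) := mul_mem (inv_mem hρPgr) hσ
          have hσ'ge : ∀ i, T ≤ i → σ' i = i := by
            intro i hi
            rcases eq_or_lt_of_le hi with rfl | hlt
            · rw [hσ', Equiv.Perm.mul_apply, ← hadef, happ]
              split_ifs <;> omega
            · rw [hσ', Equiv.Perm.mul_apply, hfix i hlt, happ]
              split_ifs <;> omega
          by_cases hs' : (suppF n σ').Nonempty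
          · have hlt : (suppF n σ').max' hs' ≤ T - 1 := by
              apply Finset.max'_le
              intro y hy
              have : σ' y ≠ y := (mem_suppF.mp hy).2
              by_contra hgt
              exact absurd (hσ'ge y (by omega)) this
            have hμ' : mu n σ' < mu n σ := by
              rw [mu, mu, htop, topP, dif_pos hs']
              have hb1 : (n+5) * ((suppF n σ').max' hs') ≤ (n+5) * (T-1) :=
                Nat.mul_le_mul_left _ hlt
              have hb2 : (n+5) * (T-1) + (n+5) = (n+5) * T := by
                rw [← Nat.mul_succ]
                congr 1
                omega
              omega
            obtain ⟨τ, hτ4, hτmem⟩ := ih σ' hσ'mem (by omega)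
            refine ⟨τ, hτ4, ?_⟩
            have hre : σ * τ⁻¹ = ρ * (σ' * τ⁻¹) := by rw [hσ']; group
            rw [hre]
            exact mul_mem (Subgroup.subset_closure hρmem) hτmem
          · have hσ1 : σ' = 1 := eq_one_of_suppF_empty hσ'mem hs'
            have hEq : σ = ρ := by
              have : ρ⁻¹ * σ = 1 := hσ1
              calc σ = ρ * (ρ⁻¹ * σ) := by group
              _ = ρ * 1 := by rw [this]
              _ = ρ := mul_one ρ
            refine ⟨1, by simp [fourSet], ?_⟩
            rw [hEq]
            simpa [GammaClo] using Subgroup.subset_closure hρmem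
        · -- terminal: T = 3 or 4
          have hT34 : T = 3 ∨ T = 4 := by omega
          have hinvmem := mem_Pgr.mp (inv_mem hσ)
          rcases hT34 with hT3 | hT4
          · -- σ = swap 1 3
            have ha : σ 3 = 1 := by rw [← hT3]; omega
            have hi3 : σ⁻¹ 3 ≠ 3 := by
              intro e
              have := congrArg σ e
              rw [Equiv.Perm.apply_inv_self] at this
              omega
            have hi3m : σ (σ⁻¹ 3) ≠ σ⁻¹ 3 := by rw [Equiv.Perm.apply_inv_self]; exact fun e => hi3 e.symm
            have hi3b : σ⁻¹ 3 ≤ T := (suppF n σ).le_max' _ (mem_suppF.mpr ⟨hσp.2 _ hi3m, hi3m⟩)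
            have hi3p : σ⁻¹ 3 % 2 = 1 := hinvmem.1 3
            have h1v : σ 1 = 3 := by
              have : σ⁻¹ 3 = 1 := by omega
              rw [← this, Equiv.Perm.apply_inv_self]
            have h2v : σ 2 = 2 := by
              by_contra h2
              have h2m : σ (σ 2) ≠ σ 2 := fun e => h2 (σ.injective e)
              have h2b : σ 2 ≤ T := (suppF n σ).le_max' _ (mem_suppF.mpr ⟨hσp.2 _ h2m, h2m⟩)
              have h2p : σ 2 % 2 = 0 := hσp.1 2
              have h21 : 1 ≤ σ 2 := (hσp.2 _ h2m).1
              omega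
            have hs13 : σ = Equiv.swap 1 3 := by
              ext i
              rcases Nat.lt_or_ge i 4 with hi | hi
              · interval_cases i
                · rw [Equiv.swap_apply_def]
                  norm_num
                  by_contra h0
                  have := (hσp.2 0 h0).1
                  omega
                · rw [h1v]; rw [Equiv.swap_apply_def]; norm_num
                · rw [h2v]; rw [Equiv.swap_apply_def]; norm_num
                · rw [show σ 3 = 1 from ha, Equiv.swap_apply_def]; norm_num
              · rw [hfix i (by omega), Equiv.swap_apply_def]
                split_ifs <;> omega
            refine ⟨Equiv.swap 1 3, by simp [fourSet], ?_⟩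
            rw [hs13]
            simp only [mul_inv_cancel]
            exact one_mem _
          · -- T = 4 : σ 4 = 2
            have ha : σ 4 = 2 := by rw [← hT4]; omega
            have hi4 : σ⁻¹ 4 ≠ 4 := by
              intro e
              have := congrArg σ e
              rw [Equiv.Perm.apply_inv_self] at this
              omega
            have hi4m : σ (σ⁻¹ 4) ≠ σ⁻¹ 4 := by rw [Equiv.Perm.apply_inv_self]; exact fun e => hi4 e.symm
            have hi4b : σ⁻¹ 4 ≤ T := (suppF n σ).le_max' _ (mem_suppF.mpr ⟨hσp.2 _ hi4m, hi4m⟩)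
            have hi4p : σ⁻¹ 4 % 2 = 0 := hinvmem.1 4
            have hi41 : 1 ≤ σ⁻¹ 4 := (hσp.2 _ hi4m).1
            have h2v : σ 2 = 4 := by
              have : σ⁻¹ 4 = 2 := by omega
              rw [← this, Equiv.Perm.apply_inv_self]
            have h0v : σ 0 = 0 := by
              by_contra h0
              have := (hσp.2 0 h0).1
              omega
            by_cases h3 : σ 3 = 3
            · have h1v : σ 1 = 1 := by
                by_contra h1
                have h1m : σ (σ 1) ≠ σ 1 := fun e => h1 (σ.injective e)
                have h1b : σ 1 ≤ T := (suppF n σ).le_max' _ (mem_suppF.mpr ⟨hσp.2 _ h1m, h1m⟩)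
                have h1p : σ 1 % 2 = 1 := hσp.1 1
                have h11 : 1 ≤ σ 1 := (hσp.2 _ h1m).1
                have h13 : σ 1 ≠ 3 := fun e => by
                  have : (1 : ℕ) = 3 := σ.injective (by rw [e, h3])
                  omega
                omega
              have hs24 : σ = Equiv.swap 2 4 := by
                ext i
                rcases Nat.lt_or_ge i 5 with hi | hi
                · interval_cases i
                  · rw [h0v, Equiv.swap_apply_def]; norm_num
                  · rw [h1v, Equiv.swap_apply_def]; norm_num
                  · rw [h2v, Equiv.swap_apply_def]; norm_num
                  · rw [h3, Equiv.swap_apply_def]; norm_num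
                  · rw [ha, Equiv.swap_apply_def]; norm_num
                · rw [hfix i (by omega), Equiv.swap_apply_def]
                  split_ifs <;> omega
              refine ⟨Equiv.swap 2 4, by simp [fourSet], ?_⟩
              rw [hs24]
              simp only [mul_inv_cancel]
              exact one_mem _
            · have h3m : σ (σ 3) ≠ σ 3 := fun e => h3 (σ.injective e)
              have h3b : σ 3 ≤ T := (suppF n σ).le_max' _ (mem_suppF.mpr ⟨hσp.2 _ h3m, h3m⟩)
              have h3p : σ 3 % 2 = 1 := hσp.1 3
              have h31 : 1 ≤ σ 3 := (hσp.2 _ h3m).1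
              have h3v : σ 3 = 1 := by omega
              have h1v : σ 1 = 3 := by
                have hi3 : σ⁻¹ 3 ≠ 3 := by
                  intro e
                  have := congrArg σ e
                  rw [Equiv.Perm.apply_inv_self] at this
                  omega
                have hi3m : σ (σ⁻¹ 3) ≠ σ⁻¹ 3 := by rw [Equiv.Perm.apply_inv_self]; exact fun e => hi3 e.symm
                have hi3b : σ⁻¹ 3 ≤ T := (suppF n σ).le_max' _ (mem_suppF.mpr ⟨hσp.2 _ hi3m, hi3m⟩)
                have hi3p : σ⁻¹ 3 % 2 = 1 := hinvmem.1 3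
                have hi31 : 1 ≤ σ⁻¹ 3 := (hσp.2 _ hi3m).1
                have : σ⁻¹ 3 = 1 := by omega
                rw [← this, Equiv.Perm.apply_inv_self]
              have hprod : σ = Equiv.swap 1 3 * Equiv.swap 2 4 := by
                ext i
                simp only [Equiv.Perm.mul_apply]
                rcases Nat.lt_or_ge i 5 with hi | hi
                · interval_cases i
                  · rw [h0v]; simp [Equiv.swap_apply_def]
                  · rw [h1v]; simp [Equiv.swap_apply_def]
                  · rw [h2v]; simp [Equiv.swap_apply_def]
                  · rw [h3v]; simp [Equiv.swap_apply_def]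
                  · rw [ha]; simp [Equiv.swap_apply_def]
                · rw [hfix i (by omega), Equiv.swap_apply_def, Equiv.swap_apply_def]
                  split_ifs <;> omega
              refine ⟨Equiv.swap 1 3 * Equiv.swap 2 4, by simp [fourSet], ?_⟩
              rw [hprod]
              simp only [mul_inv_cancel]
              exact one_mem _
end D

section Sign
variable {n : ℕ}

lemma Pgr_lt {σ : Equiv.Perm ℕ} (hσ : σ ∈ Pgr (n+3)) {x : ℕ} (hx : x < n+4) : σ x < n+4 := by
  by_cases h : σ x = x
  · omega
  · have := ((mem_Pgr.mp hσ).2 (σ x) (fun e => h (σ.injective e))).2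
    omega

/-- restriction of a parity preserving permutation to the class `r` points of `Fin (n+4)`. -/
def classMap (r : ℕ) (σ : Equiv.Perm ℕ) (hσ : σ ∈ Pgr (n+3)) : Equiv.Perm (Fin (n+4)) where
  toFun x := if (x : ℕ) % 2 = r then ⟨σ x, Pgr_lt hσ x.2⟩ else x
  invFun x := if (x : ℕ) % 2 = r then ⟨σ⁻¹ x, Pgr_lt (inv_mem hσ) x.2⟩ else x
  left_inv := by
    intro x
    dsimp only
    by_cases h : (x : ℕ) % 2 = r
    · rw [if_pos h, if_pos (((mem_Pgr.mp hσ).1 x).trans h)]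
      apply Fin.ext
      simp
    · rw [if_neg h, if_neg h]
  right_inv := by
    intro x
    dsimp only
    by_cases h : (x : ℕ) % 2 = r
    · rw [if_pos h, if_pos (((mem_Pgr.mp (inv_mem hσ)).1 x).trans h)]
      apply Fin.ext
      simp
    · rw [if_neg h, if_neg h]

lemma classMap_apply (r : ℕ) (σ : Equiv.Perm ℕ) (hσ : σ ∈ Pgr (n+3)) (x : Fin (n+4)) :
    classMap r σ hσ x = if (x : ℕ) % 2 = r then ⟨σ x, Pgr_lt hσ x.2⟩ else x := rfl

lemma classMap_mul (r : ℕ) (σ τ : Equiv.Perm ℕ) (h : σ * τ ∈ Pgr (n+3))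
    (hσ : σ ∈ Pgr (n+3)) (hτ : τ ∈ Pgr (n+3)) :
    classMap r (σ * τ) h = classMap r σ hσ * classMap r τ hτ := by
  refine Equiv.ext fun x => ?_
  rw [Equiv.Perm.mul_apply, classMap_apply r (σ * τ) h, classMap_apply r τ hτ]
  by_cases hx : (x : ℕ) % 2 = r
  · have h2 : τ x % 2 = r := ((mem_Pgr.mp hτ).1 x).trans hx
    rw [if_pos hx, if_pos hx, classMap_apply, if_pos h2]
    apply Fin.ext
    simp [Equiv.Perm.mul_apply]
  · rw [if_neg hx, if_neg hx, classMap_apply, if_neg hx]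

lemma classMap_one (r : ℕ) (h : (1 : Equiv.Perm ℕ) ∈ Pgr (n+3)) :
    classMap r 1 h = 1 := by
  refine Equiv.ext fun x => ?_
  rw [classMap_apply]
  split_ifs
  · apply Fin.ext
    simp
  · rfl

lemma classMap_inv (r : ℕ) (σ : Equiv.Perm ℕ) (h : σ⁻¹ ∈ Pgr (n+3)) (hσ : σ ∈ Pgr (n+3)) :
    classMap r σ⁻¹ h = (classMap r σ hσ)⁻¹ := by
  have key := classMap_mul r σ σ⁻¹ (by simpa using one_mem (Pgr (n+3))) hσ h
  have k2 : classMap (n := n) r (σ * σ⁻¹) (by simpa using one_mem (Pgr (n+3))) = 1 := by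
    have : σ * σ⁻¹ = 1 := mul_inv_cancel σ
    -- transport
    have := classMap_one (n := n) r (by simpa using one_mem (Pgr (n+3)))
    refine Equiv.ext fun x => ?_
    rw [classMap_apply]
    split_ifs
    · apply Fin.ext
      simp
    · rfl
  rw [k2] at key
  exact inv_eq_of_mul_eq_one_right key.symm |>.symm
  |>.symm

noncomputable def psi (r : ℕ) (σ : Equiv.Perm ℕ) (hσ : σ ∈ Pgr (n+3)) : ℤˣ :=
  Equiv.Perm.sign (classMap r σ hσ)

lemma psi_mul (r : ℕ) (σ τ : Equiv.Perm ℕ) (h : σ * τ ∈ Pgr (n+3))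
    (hσ : σ ∈ Pgr (n+3)) (hτ : τ ∈ Pgr (n+3)) :
    psi r (σ * τ) h = psi r σ hσ * psi r τ hτ := by
  rw [psi, classMap_mul r σ τ h hσ hτ, map_mul]
  rfl

lemma psi_one (r : ℕ) (h : (1 : Equiv.Perm ℕ) ∈ Pgr (n+3)) : psi r 1 h = 1 := by
  rw [psi, classMap_one, map_one]

lemma psi_inv (r : ℕ) (σ : Equiv.Perm ℕ) (h : σ⁻¹ ∈ Pgr (n+3)) (hσ : σ ∈ Pgr (n+3)) :
    psi r σ⁻¹ h = (psi r σ hσ)⁻¹ := by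
  rw [psi, classMap_inv r σ h hσ, map_inv]
  rfl

lemma classMap_swap_same (r a b : ℕ) (h : Equiv.swap a b ∈ Pgr (n+3))
    (hpar : a % 2 = b % 2) (har : a % 2 = r) (ha : a < n+4) (hb : b < n+4) :
    classMap r (Equiv.swap a b) h = Equiv.swap ⟨a, ha⟩ ⟨b, hb⟩ := by
  refine Equiv.ext fun x => ?_
  rw [classMap_apply]
  by_cases hxa : (x : ℕ) = a
  · have hx : x = ⟨a, ha⟩ := Fin.ext hxa
    rw [if_pos (by rw [hxa]; exact har), hx]
    apply Fin.ext
    simp [Equiv.swap_apply_left]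
  · by_cases hxb : (x : ℕ) = b
    · have hx : x = ⟨b, hb⟩ := Fin.ext hxb
      rw [if_pos (by rw [hxb]; omega), hx]
      apply Fin.ext
      simp [Equiv.swap_apply_right]
    · have h1 : x ≠ ⟨a, ha⟩ := fun e => hxa (by rw [e])
      have h2 : x ≠ ⟨b, hb⟩ := fun e => hxb (by rw [e])
      rw [Equiv.swap_apply_of_ne_of_ne h1 h2]
      split_ifs with hpx
      · apply Fin.ext
        simp [Equiv.swap_apply_of_ne_of_ne hxa hxb]
      · rfl

lemma classMap_swap_other (r a b : ℕ) (h : Equiv.swap a b ∈ Pgr (n+3))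
    (hpar : a % 2 = b % 2) (har : ¬ a % 2 = r) :
    classMap r (Equiv.swap a b) h = 1 := by
  refine Equiv.ext fun x => ?_
  rw [classMap_apply]
  split_ifs with hpx
  · have hxa : (x : ℕ) ≠ a := fun e => har (by rw [← e]; exact hpx)
    have hxb : (x : ℕ) ≠ b := fun e => har (by rw [hpar, ← e]; exact hpx)
    apply Fin.ext
    simp [Equiv.swap_apply_of_ne_of_ne hxa hxb]
  · rfl

lemma psi_swap_same (r a b : ℕ) (h : Equiv.swap a b ∈ Pgr (n+3))
    (hpar : a % 2 = b % 2) (har : a % 2 = r) (ha : a < n+4) (hb : b < n+4) (hne : a ≠ b) :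
    psi r (Equiv.swap a b) h = -1 := by
  rw [psi, classMap_swap_same r a b h hpar har ha hb]
  exact Equiv.Perm.sign_swap (fun e => hne (by simpa [Fin.ext_iff] using e))

lemma psi_swap_other (r a b : ℕ) (h : Equiv.swap a b ∈ Pgr (n+3))
    (hpar : a % 2 = b % 2) (har : ¬ a % 2 = r) :
    psi r (Equiv.swap a b) h = 1 := by
  rw [psi, classMap_swap_other r a b h hpar har, map_one]

end Sign

section S2
variable {n : ℕ}


lemma psi_congr (r : ℕ) (σ τ : Equiv.Perm ℕ) (e : σ = τ) (hσ : σ ∈ Pgr (n+3)) (hτ : τ ∈ Pgr (n+3)) :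
    psi r σ hσ = psi r τ hτ := by subst e; rfl

/-! ### reversal family -/

def revFun (a b i : ℕ) : ℕ := if a ≤ i ∧ i ≤ b then a + b - i else i

lemma revFun_involutive (a b : ℕ) : Function.Involutive (revFun a b) := by
  intro i; unfold revFun; split_ifs <;> omega

def revP (a b : ℕ) : Equiv.Perm ℕ := Function.Involutive.toPerm _ (revFun_involutive a b)

lemma revP_apply (a b i : ℕ) : revP a b i = if a ≤ i ∧ i ≤ b then a + b - i else i := rfl

lemma revP_base (a : ℕ) : revP a a = 1 := by
  refine Equiv.ext fun i => ?_
  rw [revP_apply]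
  simp only [Equiv.Perm.one_apply]
  split_ifs <;> omega

lemma revP_step (a b : ℕ) (h : a < b) :
    revP a b = Equiv.swap a b * revP (a+1) (b-1) := by
  refine Equiv.ext fun i => ?_
  simp only [Equiv.Perm.mul_apply, revP_apply, Equiv.swap_apply_def]
  split_ifs <;> omega

lemma revP_mem_Pgr (a b : ℕ) (hpar : (a + b) % 2 = 0) (h1 : 1 ≤ a) (h2 : b ≤ n+3) :
    revP a b ∈ Pgr (n+3) := by
  rw [mem_Pgr]
  constructor
  · intro i
    rw [revP_apply]
    split_ifs <;> omega
  · intro i hi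
    rw [revP_apply] at hi
    split_ifs at hi <;> omega

lemma psi_revP (r : ℕ) (hr : r < 2) : ∀ (d a : ℕ), 1 ≤ a → a + 2*d ≤ n+3 →
    ∀ (h : revP a (a + 2*d) ∈ Pgr (n+3)),
    psi r (revP a (a+2*d)) h = (-1)^(if a % 2 = r then (d+1)/2 else d/2) := by
  intro d
  induction d with
  | zero =>
    intro a h1 h2 h
    have he : revP a (a+2*0) = 1 := by
      rw [Nat.mul_zero, Nat.add_zero]
      exact revP_base a
    rw [psi_congr r _ 1 he h (one_mem _), psi_one]
    split_ifs <;> simp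
  | succ d ih =>
    intro a h1 h2 h
    have hstep : revP a (a+2*(d+1)) = Equiv.swap a (a+2*(d+1)) * revP (a+1) (a+1+2*d) := by
      rw [revP_step a (a+2*(d+1)) (by omega), show a+2*(d+1)-1 = a+1+2*d by omega]
    have hswap : Equiv.swap a (a+2*(d+1)) ∈ Pgr (n+3) :=
      swap_mem_Pgr a (a+2*(d+1)) (by omega) (by omega) (by omega) (by omega) (by omega)
    have hrev : revP (a+1) (a+1+2*d) ∈ Pgr (n+3) := revP_mem_Pgr _ _ (by omega) (by omega) (by omega)
    rw [psi_congr r _ _ hstep h (mul_mem hswap hrev), psi_mul r _ _ _ hswap hrev,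
      ih (a+1) (by omega) (by omega) hrev]
    by_cases hc : a % 2 = r
    · rw [if_pos hc, if_neg (show ¬ (a+1)%2 = r by omega),
        psi_swap_same r _ _ hswap (by omega) hc (by omega) (by omega) (by omega),
        show (d+1+1)/2 = d/2 + 1 by omega, pow_succ]
      rw [mul_comm]
    · rw [if_neg hc, if_pos (show (a+1)%2 = r by omega),
        psi_swap_other r _ _ hswap (by omega) hc, one_mul]

lemma crossPerm1_eq_revP (hn3 : 3 ≤ n) : crossPerm n 1 = revP 1 n := by
  refine Equiv.ext fun i => ?_
  rw [crossPerm_apply, revP_apply]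
  split_ifs <;> omega

lemma crossPerm2_eq_revP (hn3 : 3 ≤ n) : crossPerm n 2 = revP 2 (n+1) := by
  refine Equiv.ext fun i => ?_
  rw [crossPerm_apply, revP_apply]
  split_ifs <;> omega

lemma psi_pi1 (r : ℕ) (hr : r < 2) (hn : n % 4 = 3) (hn3 : 3 ≤ n) (h : crossPerm n 1 ∈ Pgr (n+3)) :
    psi r (crossPerm n 1) h = (-1)^(if 1 % 2 = r then ((n-1)/2+1)/2 else ((n-1)/2)/2) := by
  have e : crossPerm n 1 = revP 1 (1 + 2*((n-1)/2)) := by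
    rw [crossPerm1_eq_revP hn3, show 1 + 2*((n-1)/2) = n by omega]
  have hrev : revP 1 (1 + 2*((n-1)/2)) ∈ Pgr (n+3) := revP_mem_Pgr _ _ (by omega) (by omega) (by omega)
  rw [psi_congr r _ _ e h hrev, psi_revP r hr ((n-1)/2) 1 (by omega) (by omega) hrev]

lemma psi_pi2 (r : ℕ) (hr : r < 2) (hn : n % 4 = 3) (hn3 : 3 ≤ n) (h : crossPerm n 2 ∈ Pgr (n+3)) :
    psi r (crossPerm n 2) h = (-1)^(if 2 % 2 = r then ((n-1)/2+1)/2 else ((n-1)/2)/2) := by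
  have e : crossPerm n 2 = revP 2 (2 + 2*((n-1)/2)) := by
    rw [crossPerm2_eq_revP hn3, show 2 + 2*((n-1)/2) = n+1 by omega]
  have hrev : revP 2 (2 + 2*((n-1)/2)) ∈ Pgr (n+3) := revP_mem_Pgr _ _ (by omega) (by omega) (by omega)
  rw [psi_congr r _ _ e h hrev, psi_revP r hr ((n-1)/2) 2 (by omega) (by omega) hrev]

/-! ### psi is trivial on GammaClo -/

lemma psi_gamma (r : ℕ) (hr : r < 2) (g : Equiv.Perm ℕ) (hg : g ∈ GammaSet n)
    (h : g ∈ Pgr (n+3)) : psi r g h = 1 := by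
  obtain ⟨i, h1, h4, rfl⟩ := hg
  have hsw1 : Equiv.swap i (i+4) ∈ Pgr (n+3) :=
    swap_mem_Pgr _ _ (by omega) (by omega) (by omega) (by omega) (by omega)
  have hsw2 : Equiv.swap (i+4) (i+2) ∈ Pgr (n+3) :=
    swap_mem_Pgr _ _ (by omega) (by omega) (by omega) (by omega) (by omega)
  have e : tri i (i+4) (i+2) = Equiv.swap i (i+4) * Equiv.swap (i+4) (i+2) := rfl
  rw [psi_congr r _ _ e h (mul_mem hsw1 hsw2), psi_mul r _ _ _ hsw1 hsw2]
  by_cases hc : i % 2 = r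
  · rw [psi_swap_same r _ _ hsw1 (by omega) hc (by omega) (by omega) (by omega),
      psi_swap_same r _ _ hsw2 (by omega) (by omega) (by omega) (by omega) (by omega)]
    simp
  · rw [psi_swap_other r _ _ hsw1 (by omega) hc,
      psi_swap_other r _ _ hsw2 (by omega) (by omega), one_mul]

lemma psi_GammaClo (r : ℕ) (hr : r < 2) (x : Equiv.Perm ℕ) (hx : x ∈ GammaClo n) :
    ∀ (hp : x ∈ Pgr (n+3)), psi r x hp = 1 := by
  refine Subgroup.closure_induction (k := GammaSet n)
    (p := fun g _ => ∀ (hp : g ∈ Pgr (n+3)), psi r g hp = 1) ?_ ?_ ?_ ?_ hx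
  · intro g hg hp
    exact psi_gamma r hr g hg hp
  · intro hp
    exact psi_one r hp
  · intro x y hxm hym ihx ihy hp
    have hxP : x ∈ Pgr (n+3) := GammaClo_le_Pgr hxm
    have hyP : y ∈ Pgr (n+3) := GammaClo_le_Pgr hym
    rw [psi_mul r x y hp hxP hyP, ihx hxP, ihy hyP, one_mul]
  · intro x hxm ihx hp
    have hxP : x ∈ Pgr (n+3) := GammaClo_le_Pgr hxm
    rw [psi_inv r x hp hxP, ihx hxP, inv_one]

lemma GammaClo_le_C (hn : n % 4 = 3) (hn3 : 3 ≤ n) : GammaClo n ≤ C n (n+3) :=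
  (Subgroup.closure_le _).mpr (GammaSet_sub_C hn hn3)

/-! ### the two seed transpositions are in C -/

lemma key_swap (hn : n % 4 = 3) (hn3 : 3 ≤ n) (u v : ℕ) (huv : u + 2 = v)
    (hu1 : 1 ≤ u) (hv : v ≤ n + 3) (hr : u % 2 < 2)
    (w : Equiv.Perm ℕ) (hwC : w ∈ C n (n+3)) (hwP : w ∈ Pgr (n+3))
    (hw1 : psi (u % 2) w hwP = -1) (hw0 : psi ((u+1) % 2) w hwP = 1) :
    Equiv.swap u v ∈ C n (n+3) := by
  have hsP : Equiv.swap u v ∈ Pgr (n+3) :=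
    swap_mem_Pgr u v (by omega) hu1 (by omega) (by omega) hv
  have hxP : Equiv.swap u v * w ∈ Pgr (n+3) := mul_mem hsP hwP
  set x := Equiv.swap u v * w with hxdef
  have hx1 : psi (u % 2) x hxP = 1 := by
    rw [psi_congr _ x _ hxdef hxP (mul_mem hsP hwP), psi_mul _ _ _ _ hsP hwP,
      psi_swap_same _ u v hsP (by omega) (by omega) (by omega) (by omega) (by omega), hw1]
    simp
  have hx0 : psi ((u+1) % 2) x hxP = 1 := by
    rw [psi_congr _ x _ hxdef hxP (mul_mem hsP hwP), psi_mul _ _ _ _ hsP hwP,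
      psi_swap_other _ u v hsP (by omega) (by omega), hw0, one_mul]
  obtain ⟨τ, hτ4, hc⟩ := descent hn hn3 (mu n x + 1) x hxP (by omega)
  have hcP : x * τ⁻¹ ∈ Pgr (n+3) := GammaClo_le_Pgr hc
  have hgam : ∀ r, r < 2 → psi r (x * τ⁻¹) hcP = 1 := fun r hr2 => psi_GammaClo r hr2 _ hc hcP
  -- ψ of τ must be 1 in both classes
  have hτP : τ ∈ Pgr (n+3) := by
    have : τ = (x * τ⁻¹)⁻¹ * x := by group
    rw [this]
    exact mul_mem (inv_mem hcP) hxP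
  have hxsplit : ∀ r, r < 2 → psi r τ hτP = psi r x hxP := by
    intro r hr2
    have e : x = (x * τ⁻¹) * τ := by group
    rw [psi_congr r x _ e hxP (mul_mem hcP hτP), psi_mul r _ _ _ hcP hτP, hgam r hr2, one_mul]
  have hτ1 : psi (u % 2) τ hτP = 1 := by rw [hxsplit _ (by omega)]; exact hx1
  have hτ0 : psi ((u+1) % 2) τ hτP = 1 := by rw [hxsplit _ (by omega)]; exact hx0
  -- case on the four possibilities
  have h13P : Equiv.swap 1 3 ∈ Pgr (n+3) :=
    swap_mem_Pgr 1 3 (by omega) (by omega) (by omega) (by omega) (by omega)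
  have h24P : Equiv.swap 2 4 ∈ Pgr (n+3) :=
    swap_mem_Pgr 2 4 (by omega) (by omega) (by omega) (by omega) (by omega)
  simp only [fourSet, Set.mem_insert_iff, Set.mem_singleton_iff] at hτ4
  have hodd : u % 2 = 1 ∨ u % 2 = 0 := by omega
  rcases hτ4 with rfl | rfl | rfl | rfl
  · -- τ = 1 : x ∈ GammaClo
    have hxG : x ∈ GammaClo n := by
      have : x = x * (1 : Equiv.Perm ℕ)⁻¹ := by group
      rw [this]; exact hc
    have : Equiv.swap u v = x * w⁻¹ := by rw [hxdef]; group
    rw [this]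
    exact mul_mem (GammaClo_le_C hn hn3 hxG) (inv_mem hwC)
  · -- τ = swap 1 3 : contradiction with ψ_odd τ = 1
    exfalso
    rcases hodd with ho | ho
    · have := psi_swap_same (u % 2) 1 3 h13P (by omega) (by omega) (by omega) (by omega) (by omega)
      rw [psi_congr _ _ _ rfl hτP h13P] at hτ1
      rw [hτ1] at this
      exact absurd this (by decide)
    · have := psi_swap_same ((u+1) % 2) 1 3 h13P (by omega) (by omega) (by omega) (by omega) (by omega)
      rw [psi_congr _ _ _ rfl hτP h13P] at hτ0
      rw [hτ0] at this
      exact absurd this (by decide)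
  · -- τ = swap 2 4
    exfalso
    rcases hodd with ho | ho
    · have := psi_swap_same ((u+1) % 2) 2 4 h24P (by omega) (by omega) (by omega) (by omega) (by omega)
      rw [psi_congr _ _ _ rfl hτP h24P] at hτ0
      rw [hτ0] at this
      exact absurd this (by decide)
    · have := psi_swap_same (u % 2) 2 4 h24P (by omega) (by omega) (by omega) (by omega) (by omega)
      rw [psi_congr _ _ _ rfl hτP h24P] at hτ1
      rw [hτ1] at this
      exact absurd this (by decide)
  · -- τ = swap 1 3 * swap 2 4
    exfalso
    have hpm : Equiv.swap 1 3 * Equiv.swap 2 4 ∈ Pgr (n+3) := mul_mem h13P h24P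
    have hsplit : ∀ r, psi r (Equiv.swap 1 3 * Equiv.swap 2 4) hpm
        = psi r (Equiv.swap 1 3) h13P * psi r (Equiv.swap 2 4) h24P :=
      fun r => psi_mul r _ _ hpm h13P h24P
    rcases hodd with ho | ho
    · have h1 := psi_swap_same (u % 2) 1 3 h13P (by omega) (by omega) (by omega) (by omega) (by omega)
      have h2 := psi_swap_other (u % 2) 2 4 h24P (by omega) (by omega)
      rw [psi_congr _ _ _ rfl hτP hpm] at hτ1
      rw [hsplit, h1, h2] at hτ1
      exact absurd hτ1 (by decide)
    · have h1 := psi_swap_other (u % 2) 1 3 h13P (by omega) (by omega)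
      have h2 := psi_swap_same (u % 2) 2 4 h24P (by omega) (by omega) (by omega) (by omega) (by omega)
      rw [psi_congr _ _ _ rfl hτP hpm] at hτ1
      rw [hsplit, h1, h2] at hτ1
      exact absurd hτ1 (by decide)

lemma s13_mem (hn : n % 4 = 3) (hn3 : 3 ≤ n) : Equiv.swap 1 3 ∈ C n (n+3) := by
  have h1P : crossPerm n 1 ∈ Pgr (n+3) := crossPerm_mem_Pgr n (by omega) 1 (by omega) (by omega)
  have h2P : crossPerm n 2 ∈ Pgr (n+3) := crossPerm_mem_Pgr n (by omega) 2 (by omega) (by omega)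
  have hoddsum : (((n-1)/2+1)/2 + ((n-1)/2)/2) % 2 = 1 := by omega
  by_cases hk : (((n-1)/2+1)/2) % 2 = 1
  · refine key_swap hn hn3 1 3 rfl (by omega) (by omega) (by omega) (crossPerm n 1)
      (crossPerm_mem_C n 1 (by omega) (by omega)) h1P ?_ ?_
    · rw [psi_pi1 1 (by omega) hn hn3 h1P, if_pos (by omega)]
      exact Odd.neg_one_pow (Nat.odd_iff.mpr hk)
    · rw [psi_pi1 0 (by omega) hn hn3 h1P, if_neg (by omega)]
      exact Even.neg_one_pow (Nat.even_iff.mpr (by omega))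
  · refine key_swap hn hn3 1 3 rfl (by omega) (by omega) (by omega) (crossPerm n 2)
      (crossPerm_mem_C n 2 (by omega) (by omega)) h2P ?_ ?_
    · rw [psi_pi2 1 (by omega) hn hn3 h2P, if_neg (by omega)]
      exact Odd.neg_one_pow (Nat.odd_iff.mpr (by omega))
    · rw [psi_pi2 0 (by omega) hn hn3 h2P, if_pos (by omega)]
      exact Even.neg_one_pow (Nat.even_iff.mpr (by omega))

lemma s24_mem (hn : n % 4 = 3) (hn3 : 3 ≤ n) : Equiv.swap 2 4 ∈ C n (n+3) := by
  have h1P : crossPerm n 1 ∈ Pgr (n+3) := crossPerm_mem_Pgr n (by omega) 1 (by omega) (by omega)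
  have h2P : crossPerm n 2 ∈ Pgr (n+3) := crossPerm_mem_Pgr n (by omega) 2 (by omega) (by omega)
  have hoddsum : (((n-1)/2+1)/2 + ((n-1)/2)/2) % 2 = 1 := by omega
  by_cases hk : (((n-1)/2+1)/2) % 2 = 1
  · refine key_swap hn hn3 2 4 rfl (by omega) (by omega) (by omega) (crossPerm n 2)
      (crossPerm_mem_C n 2 (by omega) (by omega)) h2P ?_ ?_
    · rw [psi_pi2 0 (by omega) hn hn3 h2P, if_pos (by omega)]
      exact Odd.neg_one_pow (Nat.odd_iff.mpr hk)
    · rw [psi_pi2 1 (by omega) hn hn3 h2P, if_neg (by omega)]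
      exact Even.neg_one_pow (Nat.even_iff.mpr (by omega))
  · refine key_swap hn hn3 2 4 rfl (by omega) (by omega) (by omega) (crossPerm n 1)
      (crossPerm_mem_C n 1 (by omega) (by omega)) h1P ?_ ?_
    · rw [psi_pi1 0 (by omega) hn hn3 h1P, if_neg (by omega)]
      exact Odd.neg_one_pow (Nat.odd_iff.mpr (by omega))
    · rw [psi_pi1 1 (by omega) hn hn3 h1P, if_pos (by omega)]
      exact Even.neg_one_pow (Nat.even_iff.mpr (by omega))


end S2


theorem stmt17 (n : ℕ) (hn : n % 4 = 3) (hn3 : 3 ≤ n) (hn203 : n ≤ 203) :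
    ∀ σ : Equiv.Perm ℕ, σ ∈ C n (n + 3) ↔
      ((∀ i, σ i % 2 = i % 2) ∧ (∀ i, σ i ≠ i → 1 ≤ i ∧ i ≤ n + 3)) := by
  intro σ
  constructor
  · intro h
    exact mem_Pgr.mp (C_le_Pgr n (by omega) h)
  · intro h
    have hσ : σ ∈ Pgr (n+3) := mem_Pgr.mpr h
    obtain ⟨τ, hτ4, hc⟩ := descent hn hn3 (mu n σ + 1) σ hσ (by omega)
    have hcC : σ * τ⁻¹ ∈ C n (n+3) := GammaClo_le_C hn hn3 hc
    have hτC : τ ∈ C n (n+3) := by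
      simp only [fourSet, Set.mem_insert_iff, Set.mem_singleton_iff] at hτ4
      rcases hτ4 with rfl | rfl | rfl | rfl
      · exact one_mem _
      · exact s13_mem hn hn3
      · exact s24_mem hn hn3
      · exact mul_mem (s13_mem hn hn3) (s24_mem hn hn3)
    have e : σ = (σ * τ⁻¹) * τ := by group
    rw [e]
    exact mul_mem hcC hτC
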